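/- Let $M$ be a finitely generated $\mathbb{Z}^n$-graded module over $R = k[x_1,\ldots,x_n]$ with a Stanley decomposition $\mathcal{S} = \{(m_1,G_1),\ldots,(m_p,G_p)\}$ such that each $(\deg m_i)^+$ is square-free, $G_i = \{x_l : l \in \mathrm{supp}((\deg m_i)^+)\}$, and $|\deg m_1| \ge \cdots \ge |\deg m_p|$. Set $M^{(j)} = \sum_{i=1}^j R m_i$. Then for each $j = 1,\ldots,p$, the set $\bigcup_{i=1}^{j} \{u m_i : u \text{ a monomial in } k[G_i]\}$ is a $k$-basis of $M^{(j)}$. -/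

import Mathlib

/-!
Common definitions: `ℤⁿ`-graded modules over `R = k[x_1, …, x_n]`, Stanley
decompositions, the Čech complex on `x_1, …, x_n` (computing local cohomology
`H^i_𝔪` and, via the standard characterization, Castelnuovo–Mumford regularity),
and `Ext^i_R(R/I, ω_R)` for a monomial ideal `I`, computed with its natural
`ℤⁿ`-grading from the Taylor complex, which is a graded free resolution of `R/I`
on a chosen set of monomial generators of `I`.
-/

open MvPolynomial

namespace Paper

variable {k : Type} [Field k] {n : ℕ}

/-- The unit vector `e j` in `ℤⁿ`. -/
def eZ (n : ℕ) (j : Fin n) : Fin n → ℤ := fun i => if i = j then 1 else 0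

section Stanley

variable (k n)
variable (M : Type) [AddCommGroup M] [Module (MvPolynomial (Fin n) k) M]
  [Module k M] [IsScalarTower k (MvPolynomial (Fin n) k) M]

/-- The `k`-subspace `k[G]m` of `M` spanned by all `u • m`, `u` a monomial in the
variables of `G`. -/
def stanleySpan (m : M) (G : Set (Fin n)) : Submodule k M :=
  Submodule.span k
    {x | ∃ u : Fin n →₀ ℕ, ↑u.support ⊆ G ∧ x = (monomial u (1 : k) : MvPolynomial (Fin n) k) • m}

/-- `k[G]m` is a Stanley space: no monomial in the variables of `G` kills `m`. -/
def IsStanleySpace (m : M) (G : Set (Fin n)) : Prop :=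
  ∀ u : Fin n →₀ ℕ, ↑u.support ⊆ G → (monomial u (1 : k) : MvPolynomial (Fin n) k) • m ≠ 0

/-- A Stanley decomposition of `M`: finitely many pairs `(m i, G i)` such that each
`k[G i](m i)` is a Stanley space and `M = ⊕ᵢ k[G i](m i)` as `k`-vector spaces. -/
def IsStanleyDecomposition {p : ℕ} (m : Fin p → M) (G : Fin p → Set (Fin n)) : Prop :=
  (∀ i, IsStanleySpace k n M (m i) (G i)) ∧
    DirectSum.IsInternal (fun i : Fin p => stanleySpan k n M (m i) (G i))

end Stanley

section PartialSpan

variable (k n)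

/-- `M⁽ʲ⁾ = R m_1 + ⋯ + R m_j`, the `R`-submodule generated by the first `j`
elements of the family `m`. -/
noncomputable def partialSpan (M : Type) [AddCommGroup M] [Module (MvPolynomial (Fin n) k) M]
    {p : ℕ} (m : Fin p → M) (j : ℕ) : Submodule (MvPolynomial (Fin n) k) M :=
  Submodule.span (MvPolynomial (Fin n) k) (m '' {i : Fin p | (i : ℕ) < j})

end PartialSpan

section Cech

variable (k n)

/-- The multiplicative set generated by the variables `x i`, `i ∈ Λ`. -/
noncomputable def varSubmonoid (Λ : Finset (Fin n)) : Submonoid (MvPolynomial (Fin n) k) :=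
  Submonoid.closure ((fun i => (X i : MvPolynomial (Fin n) k)) '' ↑Λ)

lemma varSubmonoid_mono {Λ Λ' : Finset (Fin n)} (h : Λ ⊆ Λ') :
    varSubmonoid k n Λ ≤ varSubmonoid k n Λ' :=
  Submonoid.closure_mono (fun _ ⟨x, hx, e⟩ => ⟨x, h hx, e⟩)

variable (M : Type) [AddCommGroup M] [Module (MvPolynomial (Fin n) k) M]

/-- The localization `M_{x_Λ}` of `M` inverting the variables in `Λ`. -/
abbrev LocM (Λ : Finset (Fin n)) : Type := LocalizedModule (varSubmonoid k n Λ) M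

/-- The canonical map `M_{x_Λ} → M_{x_Λ'}` for `Λ ⊆ Λ'`. -/
noncomputable def locMap {Λ Λ' : Finset (Fin n)} (h : Λ ⊆ Λ') :
    LocM k n M Λ →ₗ[MvPolynomial (Fin n) k] LocM k n M Λ' :=
  LocalizedModule.lift _ (LocalizedModule.mkLinearMap (varSubmonoid k n Λ') M)
    (fun s => IsLocalizedModule.map_units (LocalizedModule.mkLinearMap (varSubmonoid k n Λ') M)
      ⟨(s : MvPolynomial (Fin n) k), varSubmonoid_mono k n h s.2⟩)

/-- The `j`-th term `Čʲ(M) = ⊕_{|Λ| = j} M_{x_Λ}` of the Čech complex of `M` on the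
variables `x 1, …, x n`. -/
abbrev CechTerm (j : ℕ) : Type :=
  ∀ Λ : {S : Finset (Fin n) // S.card = j}, LocM k n M Λ.1

/-- The Čech differential, an alternating sum of localization maps. -/
noncomputable def cechD (j : ℕ) :
    CechTerm k n M j →ₗ[MvPolynomial (Fin n) k] CechTerm k n M (j + 1) :=
  LinearMap.pi fun Λ' : {S : Finset (Fin n) // S.card = j + 1} =>
    ∑ l ∈ Λ'.1.attach,
      ((-1 : ℤ) ^ ((Λ'.1.filter (fun x => x < l.1)).card)) •
        ((locMap k n M (Finset.erase_subset l.1 Λ'.1)).comp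
          (LinearMap.proj (⟨Λ'.1.erase l.1, by
            rw [Finset.card_erase_of_mem l.2, Λ'.2]; rfl⟩ :
              {S : Finset (Fin n) // S.card = j})))

/-- The coboundaries in cohomological degree `i` of the Čech complex of `M`. -/
noncomputable def cechB : (i : ℕ) → Submodule (MvPolynomial (Fin n) k) (CechTerm k n M i)
  | 0 => ⊥
  | (s + 1) => LinearMap.range (cechD k n M s)

/-- The `j`-th term of the restricted Čech subcomplex `Č_F`: only the direct summands
`M_{x_Λ}` with `F ⊆ Λ` occur (in particular it vanishes for `j < |F|`). -/
def cechSub (F : Finset (Fin n)) (j : ℕ) :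
    Submodule (MvPolynomial (Fin n) k) (CechTerm k n M j) where
  carrier := {c | ∀ Λ, ¬ F ⊆ Λ.1 → c Λ = 0}
  add_mem' := fun h1 h2 Λ h => by
    have := h1 Λ h; have := h2 Λ h
    simp_all
  zero_mem' := fun Λ h => rfl
  smul_mem' := fun r c hc Λ h => by
    have := hc Λ h
    simp_all

/-- The coboundaries of the restricted subcomplex `Č_F` in cohomological degree `i`. -/
noncomputable def cechBF (F : Finset (Fin n)) :
    (i : ℕ) → Submodule (MvPolynomial (Fin n) k) (CechTerm k n M i)
  | 0 => ⊥
  | (s + 1) => Submodule.map (cechD k n M s) (cechSub k n M F s)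

end Cech

section CechGraded

variable (k n)
variable (M : Type) [AddCommGroup M] [Module (MvPolynomial (Fin n) k) M]
variable (gr : (Fin n → ℤ) → Set M)

/-- The multidegree `a` component (for the `ℤⁿ`-grading of `M` given by `gr`) of the
localization `M_{x_Λ}`: generated by fractions `m / xˢ` where `m` is homogeneous of
multidegree `b`, `xˢ` is a monomial in the variables of `Λ` and `b - s = a`. -/
noncomputable def locPiece (Λ : Finset (Fin n)) (a : Fin n → ℤ) :
    AddSubgroup (LocM k n M Λ) :=
  AddSubgroup.closure
    {y | ∃ (m : M) (b : Fin n → ℤ) (s : Fin n →₀ ℕ)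
        (hs : (monomial s (1 : k) : MvPolynomial (Fin n) k) ∈ varSubmonoid k n Λ),
          m ∈ gr b ∧ (∀ i, b i - (s i : ℤ) = a i) ∧
            y = LocalizedModule.mk m ⟨monomial s (1 : k), hs⟩}

/-- The multidegree `a` component of the `j`-th term of the Čech complex of `M`. -/
noncomputable def cechPiece (j : ℕ) (a : Fin n → ℤ) : Set (CechTerm k n M j) :=
  {c | ∀ Λ, c Λ ∈ locPiece k n M gr Λ.1 a}

/-- The total degree `t` component of the `j`-th term of the Čech complex of `M`. -/
noncomputable def cechPieceTot (j : ℕ) (t : ℤ) : AddSubgroup (CechTerm k n M j) :=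
  ⨆ (a : Fin n → ℤ) (_ : (∑ i, a i) = t), AddSubgroup.closure (cechPiece k n M gr j a)

/-- `regLE k n M gr c` says that the Castelnuovo–Mumford regularity of the graded
module `M` (with respect to the total degree `ℤ`-grading) is at most `c`; by the
standard local cohomology characterization of regularity,
`reg M = max {i + t : Hⁱ_𝔪(M)_t ≠ 0}`, where `Hⁱ_𝔪(M)` is the cohomology of the
Čech complex of `M` on `x 1, …, x n`. -/
noncomputable def regLE (c : ℤ) : Prop :=
  ∀ (i : ℕ) (t : ℤ) (z : CechTerm k n M i),
    z ∈ LinearMap.ker (cechD k n M i) → z ∈ cechPieceTot k n M gr i t →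
      z ∉ cechB k n M i → (i : ℤ) + t ≤ c

end CechGraded

section Pieces

variable (k n)

/-- The set of homogeneous polynomials of multidegree `a ∈ ℤⁿ`
(empty if some `a i < 0`). -/
def RPieceSet (a : Fin n → ℤ) : Set (MvPolynomial (Fin n) k) :=
  {g | ∃ (c : k) (s : Fin n →₀ ℕ), (∀ i, (s i : ℤ) = a i) ∧ g = monomial s c}

/-- The multidegree `a` component of the polynomial ring, as a `k`-subspace. -/
noncomputable def RPiece (a : Fin n → ℤ) : Submodule k (MvPolynomial (Fin n) k) :=
  Submodule.span k (RPieceSet k n a)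

/-- A monomial ideal: an ideal generated by monomials. -/
def IsMonomialIdeal (I : Ideal (MvPolynomial (Fin n) k)) : Prop :=
  ∃ T : Set (Fin n →₀ ℕ), I = Ideal.span ((fun s => (monomial s (1 : k))) '' T)

/-- The multidegree `a` component of `R/I`: the image of the multidegree `a`
component of `R`. -/
def quotientGrSet (I : Ideal (MvPolynomial (Fin n) k)) (a : Fin n → ℤ) :
    Set (MvPolynomial (Fin n) k ⧸ I) :=
  (fun g => Submodule.Quotient.mk g) '' RPieceSet k n a

end Pieces

section Taylor

variable (k n)
variable {r : ℕ} (u : Fin r → (Fin n →₀ ℕ))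

/-- The exponent of the least common multiple of the monomials `x^(u l)`, `l ∈ S`. -/
noncomputable def lcmExp (S : Finset (Fin r)) : Fin n →₀ ℕ :=
  Finsupp.equivFunOnFinite.symm (fun i => S.sup (fun l => u l i))

/-- The `s`-th term of `Hom_R(T_•, ω_R)`, where `T_•` is the Taylor complex (a
`ℤⁿ`-graded free resolution of `R/I`) on the monomial generators `x^(u l)` of `I`:
as a module it is a direct sum of copies of `R` indexed by `s`-subsets of generators. -/
abbrev TaylorDual (s : ℕ) : Type :=
  ∀ _S : {S : Finset (Fin r) // S.card = s}, MvPolynomial (Fin n) k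

/-- The differential of `Hom_R(T_•, ω_R)`: the transpose of the Taylor complex
differential. -/
noncomputable def taylorD (s : ℕ) :
    TaylorDual k n (r := r) s →ₗ[MvPolynomial (Fin n) k] TaylorDual k n (r := r) (s + 1) :=
  LinearMap.pi fun S' : {S : Finset (Fin r) // S.card = s + 1} =>
    ∑ l ∈ S'.1.attach,
      (monomial (lcmExp n u S'.1 - lcmExp n u (S'.1.erase l.1))
          ((-1 : k) ^ ((S'.1.filter (fun x => x < l.1)).card))) •
        (LinearMap.proj (⟨S'.1.erase l.1, by
            rw [Finset.card_erase_of_mem l.2, S'.2]; rfl⟩ :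
              {S : Finset (Fin r) // S.card = s}))

/-- Cocycles of `Hom_R(T_•, ω_R)` in cohomological degree `i`. -/
noncomputable def extZ (i : ℕ) :
    Submodule (MvPolynomial (Fin n) k) (TaylorDual k n (r := r) i) :=
  LinearMap.ker (taylorD k n u i)

/-- Coboundaries of `Hom_R(T_•, ω_R)` in cohomological degree `i`. -/
noncomputable def extB :
    (i : ℕ) → Submodule (MvPolynomial (Fin n) k) (TaylorDual k n (r := r) i)
  | 0 => ⊥
  | (s + 1) => LinearMap.range (taylorD k n u s)

/-- `Ext^i_R(R/I, ω_R)`: the `i`-th cohomology of `Hom_R(T_•, ω_R)`, where `T_•` is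
the Taylor resolution of `R/I` on the monomial generators `x^(u l)` of `I` and
`ω_R = R(-(1,…,1))` is the canonical module. -/
noncomputable def ExtMod (i : ℕ) : Type :=
  extZ k n u i ⧸ (Submodule.comap (extZ k n u i).subtype (extB k n u i ⊓ extZ k n u i))

noncomputable instance (i : ℕ) : AddCommGroup (ExtMod k n u i) :=
  inferInstanceAs (AddCommGroup (extZ k n u i ⧸ _))

noncomputable instance (i : ℕ) : Module (MvPolynomial (Fin n) k) (ExtMod k n u i) :=
  inferInstanceAs (Module (MvPolynomial (Fin n) k) (extZ k n u i ⧸ _))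

noncomputable instance (i : ℕ) : Module k (ExtMod k n u i) :=
  inferInstanceAs (Module k (extZ k n u i ⧸ _))

noncomputable instance (i : ℕ) :
    IsScalarTower k (MvPolynomial (Fin n) k) (ExtMod k n u i) :=
  inferInstanceAs (IsScalarTower k (MvPolynomial (Fin n) k) (extZ k n u i ⧸ _))

/-- The multidegree `a` component of `Hom_R(T_s, ω_R) = ⊕_S Hom_R(R(-lcm_S), R(-(1,…,1)))`:
the component indexed by an `s`-subset `S` must be homogeneous of multidegree
`a + lcm_S - (1,…,1)` in `R`. -/
noncomputable def taylorPiece (s : ℕ) (a : Fin n → ℤ) :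
    Submodule k (TaylorDual k n (r := r) s) :=
  Submodule.pi Set.univ
    (fun S : {S : Finset (Fin r) // S.card = s} =>
      RPiece k n (fun i => a i + (lcmExp n u S.1 i : ℤ) - 1))

/-- The multidegree `a` component of `Ext^i_R(R/I, ω_R)`, i.e. of the `i`-th
cohomology of `Hom_R(T_•, ω_R)`: the image of the multidegree `a` cocycles. -/
noncomputable def extPiece (i : ℕ) (a : Fin n → ℤ) : Submodule k (ExtMod k n u i) :=
  Submodule.map
    ((Submodule.mkQ (Submodule.comap (extZ k n u i).subtype
        (extB k n u i ⊓ extZ k n u i))).restrictScalars k)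
    (Submodule.comap ((extZ k n u i).subtype.restrictScalars k) (taylorPiece k n u i a))

end Taylor

end Paper

section MyHelpers

variable {R : Type*} [Semiring R] {M : Type*} [AddCommMonoid M] [Module R M]
variable {ι : Type*} [DecidableEq ι] {N : ι → Submodule R M}

/-- The `k`-linear projection onto the `i`-th piece of an internal direct sum,
viewed as an endomorphism of `M`. -/
noncomputable def myProjOf (h : DirectSum.IsInternal N) (i : ι) : M →ₗ[R] M :=
  (N i).subtype ∘ₗ (DirectSum.component R ι (fun i => N i) i) ∘ₗ
    (LinearEquiv.ofBijective (DirectSum.coeLinearMap N) h).symm.toLinearMap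

lemma myProjOf_mem (h : DirectSum.IsInternal N) {i : ι} {x : M} (hx : x ∈ N i) :
    myProjOf h i x = x := by
  have hrfl : myProjOf h i x
      = ((LinearEquiv.ofBijective (DirectSum.coeLinearMap N) h).symm x i : M) := rfl
  rw [hrfl, h.ofBijective_coeLinearMap_of_mem hx]

lemma myProjOf_mem_ne (h : DirectSum.IsInternal N) {i j : ι} (hij : j ≠ i) {x : M}
    (hx : x ∈ N j) : myProjOf h i x = 0 := by
  have hrfl : myProjOf h i x
      = ((LinearEquiv.ofBijective (DirectSum.coeLinearMap N) h).symm x i : M) := rfl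
  rw [hrfl, h.ofBijective_coeLinearMap_of_mem_ne hij hx, Submodule.coe_zero]

end MyHelpers

section MyGrading

open Paper

variable {k : Type} [Field k] {n : ℕ}
variable {M : Type} [AddCommGroup M] [Module (MvPolynomial (Fin n) k) M]
  [Module k M] [IsScalarTower k (MvPolynomial (Fin n) k) M]

lemma my_monomial_smul_mem_gr (gr : (Fin n → ℤ) → Submodule k M)
    (hgr_compat : ∀ (j : Fin n) (a : Fin n → ℤ), ∀ x ∈ gr a,
      (X j : MvPolynomial (Fin n) k) • x ∈ gr (a + eZ n j)) :
    ∀ (u : Fin n →₀ ℕ) (b : Fin n → ℤ) (y : M), y ∈ gr b →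
      (monomial u (1 : k) : MvPolynomial (Fin n) k) • y ∈ gr (fun l => b l + (u l : ℤ)) := by
  suffices H : ∀ (Nn : ℕ) (u : Fin n →₀ ℕ), (∑ l, u l) = Nn → ∀ (b : Fin n → ℤ) (y : M),
      y ∈ gr b →
      (monomial u (1 : k) : MvPolynomial (Fin n) k) • y ∈ gr (fun l => b l + (u l : ℤ)) by
    intro u b y hy; exact H _ u rfl b y hy
  intro Nn
  induction Nn with
  | zero =>
    intro u hu b y hy
    have hu0 : u = 0 := by
      ext l
      exact (Finset.sum_eq_zero_iff.mp hu l (Finset.mem_univ l))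
    subst hu0
    have h1 : (monomial (0 : Fin n →₀ ℕ) (1 : k) : MvPolynomial (Fin n) k) = 1 := by
      rw [monomial_zero', C_1]
    rw [h1, one_smul]
    convert hy using 2
    funext l
    simp
  | succ Nn ih =>
    intro u hu b y hy
    have hex : ∃ j0 : Fin n, u j0 ≠ 0 := by
      by_contra hc
      push_neg at hc
      have : (∑ l, u l) = 0 := Finset.sum_eq_zero fun l _ => hc l
      omega
    obtain ⟨j0, hj0⟩ := hex
    set u' : Fin n →₀ ℕ := u - Finsupp.single j0 1 with hu'
    have hval : ∀ l, u' l = u l - (Finsupp.single j0 1) l := fun l =>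
      Finsupp.tsub_apply u (Finsupp.single j0 1) l
    have hadd : u' + Finsupp.single j0 1 = u := by
      ext l
      rw [Finsupp.add_apply, hval l, Finsupp.single_apply]
      by_cases hlj : j0 = l
      · subst hlj; simp; omega
      · simp [hlj]
    have hsum' : (∑ l, u' l) = Nn := by
      have h1 : (∑ l, u l) = (∑ l, u' l) + ∑ l, (Finsupp.single j0 1 : Fin n →₀ ℕ) l := by
        rw [← Finset.sum_add_distrib]
        exact Finset.sum_congr rfl fun l _ => by rw [← hadd, Finsupp.add_apply]
      have h2 : (∑ l, (Finsupp.single j0 1 : Fin n →₀ ℕ) l) = 1 := by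
        rw [Finset.sum_eq_single j0]
        · simp
        · intro b _ hb; rw [Finsupp.single_apply, if_neg (fun h => hb h.symm)]
        · intro h; exact absurd (Finset.mem_univ j0) h
      omega
    have hX : (X j0 : MvPolynomial (Fin n) k) = monomial (Finsupp.single j0 1) 1 := by
      rw [← X_pow_eq_monomial, pow_one]
    have hmul : (monomial u (1 : k) : MvPolynomial (Fin n) k)
        = monomial u' 1 * X j0 := by
      rw [hX, monomial_mul, one_mul, hadd]
    have hXy : (X j0 : MvPolynomial (Fin n) k) • y ∈ gr (b + eZ n j0) :=
      hgr_compat j0 b y hy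
    have := ih u' hsum' (b + eZ n j0) _ hXy
    have hfun : (fun l => (b + eZ n j0) l + (u' l : ℤ)) = (fun l => b l + (u l : ℤ)) := by
      funext l
      have hval' := hval l
      rw [Finsupp.single_apply] at hval'
      rw [Pi.add_apply]
      show b l + (if l = j0 then 1 else 0) + (u' l : ℤ) = b l + (u l : ℤ)
      by_cases hlj : l = j0
      · subst hlj
        rw [if_pos rfl] at hval' ⊢
        have h1 : 1 ≤ u l := Nat.one_le_iff_ne_zero.mpr hj0
        omega
      · have hne2 : j0 ≠ l := fun h => hlj h.symm
        rw [if_neg hne2] at hval'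
        rw [if_neg hlj]
        omega
    rw [hmul, mul_smul]
    exact hfun ▸ this

end MyGrading

open MvPolynomial Paper in
theorem stmt_9 {k : Type} [Field k] {n : ℕ}
    (M : Type) [AddCommGroup M] [Module (MvPolynomial (Fin n) k) M]
    [Module k M] [IsScalarTower k (MvPolynomial (Fin n) k) M]
    [Module.Finite (MvPolynomial (Fin n) k) M]
    -- `gr` is the `ℤⁿ`-grading of `M`
    (gr : (Fin n → ℤ) → Submodule k M)
    (hgr_internal : DirectSum.IsInternal gr)
    (hgr_compat : ∀ (j : Fin n) (a : Fin n → ℤ), ∀ x ∈ gr a,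
      (X j : MvPolynomial (Fin n) k) • x ∈ gr (a + eZ n j))
    -- a Stanley decomposition `{(m i, G i)}` of `M` …
    {p : ℕ} (m : Fin p → M) (G : Fin p → Set (Fin n)) (d : Fin p → (Fin n → ℤ))
    (hSD : IsStanleyDecomposition k n M m G)
    -- … by homogeneous elements `m i` of degree `d i`,
    (hdeg : ∀ i, m i ∈ gr (d i))
    -- with `(d i)⁺` square-free,
    (hsf : ∀ i l, d i l ≤ 1)
    -- `G i = supp ((d i)⁺)`,
    (hG : ∀ i, G i = {l | 0 < d i l})
    -- and the pairs ordered by weakly decreasing total degree: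
    (hord : ∀ i j : Fin p, i ≤ j → (∑ l, d j l) ≤ (∑ l, d i l)) :
    -- Then, with `M⁽ʲ⁾ = R m_1 + ⋯ + R m_j`, the set
    -- `⋃_{i ≤ j} {u • m_i : u a monomial in k[G i]}` is a `k`-basis of `M⁽ʲ⁾`:
    ∀ j : ℕ, j ≤ p →
      (LinearIndependent k
          ((↑) : {x : M | ∃ i : Fin p, (i : ℕ) < j ∧
            ∃ u : Fin n →₀ ℕ, ↑u.support ⊆ G i ∧
              x = (monomial u (1 : k) : MvPolynomial (Fin n) k) • m i} → M) ∧
        Submodule.span k {x : M | ∃ i : Fin p, (i : ℕ) < j ∧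
            ∃ u : Fin n →₀ ℕ, ↑u.support ⊆ G i ∧
              x = (monomial u (1 : k) : MvPolynomial (Fin n) k) • m i} =
          Submodule.restrictScalars k (partialSpan k n M m j)) := by
  classical
  intro j hj
  set S : Set M := {x : M | ∃ i : Fin p, (i : ℕ) < j ∧
      ∃ u : Fin n →₀ ℕ, ↑u.support ⊆ G i ∧
        x = (monomial u (1 : k) : MvPolynomial (Fin n) k) • m i} with hS
  -- degrees of the monomial multiples
  have hmem : ∀ (i : Fin p) (u : Fin n →₀ ℕ),
      (monomial u (1 : k) : MvPolynomial (Fin n) k) • m i ∈ gr (fun l => d i l + (u l : ℤ)) :=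
    fun i u => my_monomial_smul_mem_gr gr hgr_compat u (d i) (m i) (hdeg i)
  have hNmem : ∀ (i : Fin p) (u : Fin n →₀ ℕ), ↑u.support ⊆ G i →
      (monomial u (1 : k) : MvPolynomial (Fin n) k) • m i ∈ stanleySpan k n M (m i) (G i) :=
    fun i u hu => Submodule.subset_span ⟨u, hu, rfl⟩
  have hnz : ∀ (i : Fin p) (u : Fin n →₀ ℕ), ↑u.support ⊆ G i →
      (monomial u (1 : k) : MvPolynomial (Fin n) k) • m i ≠ 0 := fun i u hu => hSD.1 i u hu
  -- the key combinatorial degree comparison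
  have key : ∀ (i i' : Fin p) (v u : Fin n →₀ ℕ), i ≤ i' → ↑u.support ⊆ G i' →
      (∀ l, d i' l + (u l : ℤ) = d i l + (v l : ℤ)) →
      d i' = d i ∧ u = v ∧ (↑v.support : Set (Fin n)) ⊆ G i := by
    intro i i' v u hii' hsupp heq
    have hge : ∀ l, d i l ≤ d i' l := by
      intro l
      by_cases hl : l ∈ G i'
      · have h1 : 0 < d i' l := by rw [hG i'] at hl; exact hl
        have h2 := hsf i l
        omega
      · have hu0 : u l = 0 := by
          by_contra hcon
          exact hl (hsupp (Finsupp.mem_support_iff.mpr hcon))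
        have h3 := heq l
        have h4 : (0 : ℤ) ≤ (v l : ℤ) := Int.natCast_nonneg _
        rw [hu0] at h3
        push_cast at h3
        omega
    have hsum := hord i i' hii'
    have hzero : ∀ l, d i' l - d i l = 0 := by
      have h1 : (∑ l, (d i' l - d i l)) = (∑ l, d i' l) - (∑ l, d i l) :=
        Finset.sum_sub_distrib _ _
    -- sum of nonnegatives which is ≤ 0 is 0 termwise
      have h3 : (0 : ℤ) ≤ ∑ l, (d i' l - d i l) :=
        Finset.sum_nonneg fun l _ => by have := hge l; omega
      have h2 : (∑ l, (d i' l - d i l)) = 0 := by omega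
      intro l
      have := (Finset.sum_eq_zero_iff_of_nonneg
        (fun l _ => by have := hge l; omega)).mp h2 l (Finset.mem_univ l)
      exact this
    have hdd : d i' = d i := by
      funext l
      have := hzero l
      omega
    have huv : u = v := by
      ext l
      have h1 := heq l
      rw [hdd] at h1
      omega
    refine ⟨hdd, huv, ?_⟩
    rw [← huv]
    intro l hl
    rw [hG i]
    have h1 : l ∈ G i' := hsupp hl
    rw [hG i'] at h1
    show 0 < d i l
    rw [← congrFun hdd l]
    exact h1
  -- the union of all Stanley set generators spans M
  have htop : (⊤ : Submodule k M) = Submodule.span k (⋃ i' : Fin p,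
      {x : M | ∃ u : Fin n →₀ ℕ, ↑u.support ⊆ G i' ∧
        x = (monomial u (1 : k) : MvPolynomial (Fin n) k) • m i'}) := by
    rw [Submodule.span_iUnion]
    exact (hSD.2.submodule_iSup_eq_top).symm
  -- core lemma: every monomial multiple of `m i`, `i < j`, lies in `span k S`
  have coreA : ∀ (i : Fin p), (i : ℕ) < j → ∀ w : Fin n →₀ ℕ,
      (monomial w (1 : k) : MvPolynomial (Fin n) k) • m i ∈ Submodule.span k S := by
    intro i hij w
    by_cases hw : (↑w.support : Set (Fin n)) ⊆ G i
    · exact Submodule.subset_span ⟨i, hij, w, hw, rfl⟩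
    · set a : Fin n → ℤ := fun l => d i l + (w l : ℤ) with ha
      set U : Set M := ⋃ i' : Fin p,
        {x : M | ∃ u : Fin n →₀ ℕ, ↑u.support ⊆ G i' ∧
          x = (monomial u (1 : k) : MvPolynomial (Fin n) k) • m i'} with hU
      have hxU : (monomial w (1 : k) : MvPolynomial (Fin n) k) • m i ∈ Submodule.span k U := by
        rw [← htop]; exact Submodule.mem_top
      have hπ : myProjOf hgr_internal a ((monomial w (1 : k) : MvPolynomial (Fin n) k) • m i)
          ∈ Submodule.span k ((myProjOf hgr_internal a) '' U) := by
        rw [← Submodule.map_span]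
        exact Submodule.mem_map_of_mem hxU
      rw [myProjOf_mem hgr_internal (hmem i w)] at hπ
      refine Submodule.span_le.mpr ?_ hπ
      rintro x ⟨y, hy, rfl⟩
      simp only [hU, Set.mem_iUnion] at hy
      obtain ⟨i', u, hu, rfl⟩ := hy
      by_cases hb : (fun l => d i' l + (u l : ℤ)) = a
      · rw [myProjOf_mem hgr_internal (hb ▸ hmem i' u)]
        have hi'j : (i' : ℕ) < j := by
          by_contra hc
          have hii' : i ≤ i' := by
            rw [Fin.le_def]; omega
          have := (key i i' w u hii' hu (fun l => congrFun hb l)).2.2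
          exact hw this
        exact Submodule.subset_span ⟨i', hi'j, u, hu, rfl⟩
      · rw [myProjOf_mem_ne hgr_internal hb (hmem i' u)]
        exact Submodule.zero_mem _
  -- span k S is closed under the action of R
  have hcomm : ∀ (c : k) (q : MvPolynomial (Fin n) k) (y : M), q • (c • y) = c • (q • y) := by
    intro c q y
    rw [← algebraMap_smul (MvPolynomial (Fin n) k) c y, ← mul_smul, mul_comm, mul_smul,
      algebraMap_smul]
  have hmono : ∀ (v : Fin n →₀ ℕ) (y : M), y ∈ Submodule.span k S →
      (monomial v (1 : k) : MvPolynomial (Fin n) k) • y ∈ Submodule.span k S := by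
    intro v y hy
    refine Submodule.span_induction ?_ ?_ ?_ ?_ hy
    · rintro x ⟨i, hij, u, hu, rfl⟩
      rw [smul_smul, monomial_mul, one_mul]
      exact coreA i hij (v + u)
    · rw [smul_zero]; exact Submodule.zero_mem _
    · intro y z _ _ hy hz
      rw [smul_add]; exact Submodule.add_mem _ hy hz
    · intro c y _ hy
      rw [hcomm]
      exact Submodule.smul_mem _ _ hy
  have hRclosed : ∀ (r : MvPolynomial (Fin n) k) (y : M), y ∈ Submodule.span k S →
      r • y ∈ Submodule.span k S := by
    intro r y hy
    have hr : r • y = ∑ v ∈ r.support, (monomial v (coeff v r) : MvPolynomial (Fin n) k) • y := by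
      conv_lhs => rw [r.as_sum]
      rw [Finset.sum_smul]
    rw [hr]
    refine Submodule.sum_mem _ ?_
    intro v _
    have h1 : (monomial v (coeff v r) : MvPolynomial (Fin n) k)
        = coeff v r • monomial v (1 : k) := by
      rw [smul_monomial, smul_eq_mul, mul_one]
    rw [h1, smul_assoc]
    exact Submodule.smul_mem _ _ (hmono v y hy)
  constructor
  · -- linear independence
    refine (linearIndependent_subtype_iff.trans (linearIndepOn_iff (v := id) (s := S))).mpr ?_
    intro l hl hl0
    ext x0
    simp only [Finsupp.coe_zero, Pi.zero_apply]
    by_contra hne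
    have hx0S : x0 ∈ S := hl (Finsupp.mem_support_iff.mpr hne)
    obtain ⟨i0, hi0, u0, hu0, hx0⟩ := hx0S
    set a0 : Fin n → ℤ := fun l' => d i0 l' + (u0 l' : ℤ) with ha0
    have hπx : ∀ x ∈ l.support,
        (myProjOf hgr_internal a0) ((myProjOf hSD.2 i0) x) = if x = x0 then x0 else 0 := by
      intro x hx
      obtain ⟨i', hi', u', hu', rfl⟩ := hl hx
      by_cases hii : i' = i0
      · subst hii
        have h1 : myProjOf hSD.2 i' ((monomial u' (1 : k) : MvPolynomial (Fin n) k) • m i')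
            = (monomial u' (1 : k) : MvPolynomial (Fin n) k) • m i' :=
          myProjOf_mem hSD.2 (hNmem i' u' hu')
        by_cases hbb : (fun l' => d i' l' + (u' l' : ℤ)) = a0
        · have huu : u' = u0 := by
            ext l'
            have h2 := congrFun hbb l'
            simp only [ha0] at h2
            omega
          subst huu
          rw [h1, myProjOf_mem hgr_internal (hbb ▸ hmem i' u'),
            if_pos hx0.symm]
          exact hx0.symm
        · have hxne : (monomial u' (1 : k) : MvPolynomial (Fin n) k) • m i' ≠ x0 := by
            intro hcon
            have h2 : myProjOf hgr_internal a0
                ((monomial u' (1 : k) : MvPolynomial (Fin n) k) • m i') = 0 :=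
              myProjOf_mem_ne hgr_internal hbb (hmem i' u')
            have h3 : myProjOf hgr_internal a0
                ((monomial u' (1 : k) : MvPolynomial (Fin n) k) • m i')
                = (monomial u' (1 : k) : MvPolynomial (Fin n) k) • m i' := by
              rw [hcon, hx0]
              exact myProjOf_mem hgr_internal (hmem i' u0)
            exact hnz i' u' hu' (h3.symm.trans h2)
          rw [h1, myProjOf_mem_ne hgr_internal hbb (hmem i' u'), if_neg hxne]
      · have hxne : (monomial u' (1 : k) : MvPolynomial (Fin n) k) • m i' ≠ x0 := by
          intro hcon
          have h2 : myProjOf hSD.2 i0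
              ((monomial u' (1 : k) : MvPolynomial (Fin n) k) • m i') = 0 :=
            myProjOf_mem_ne hSD.2 hii (hNmem i' u' hu')
          have h3 : myProjOf hSD.2 i0
              ((monomial u' (1 : k) : MvPolynomial (Fin n) k) • m i')
              = (monomial u' (1 : k) : MvPolynomial (Fin n) k) • m i' := by
            rw [hcon, hx0]
            exact myProjOf_mem hSD.2 (hNmem i0 u0 hu0)
          exact hnz i' u' hu' (h3.symm.trans h2)
        rw [myProjOf_mem_ne hSD.2 hii (hNmem i' u' hu'), map_zero, if_neg hxne]
    have hx0ne : x0 ≠ 0 := by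
      rw [hx0]; exact hnz i0 u0 hu0
    have hsum : (myProjOf hgr_internal a0) ((myProjOf hSD.2 i0)
        (Finsupp.linearCombination k id l)) = l x0 • x0 := by
      rw [Finsupp.linearCombination_apply, Finsupp.sum, map_sum, map_sum]
      have h1 : ∀ x ∈ l.support, (myProjOf hgr_internal a0) ((myProjOf hSD.2 i0) (l x • id x))
          = if x = x0 then l x • x0 else 0 := by
        intro x hx
        simp only [id_eq]
        rw [map_smul, map_smul, hπx x hx]
        by_cases h : x = x0
        · rw [if_pos h, if_pos h]
        · rw [if_neg h, if_neg h, smul_zero]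
      rw [Finset.sum_congr rfl h1]
      rw [Finset.sum_ite_eq' l.support x0 (fun x => l x • x0)]
      rw [if_pos (Finsupp.mem_support_iff.mpr hne)]
    rw [hl0, map_zero, map_zero] at hsum
    rcases smul_eq_zero.mp hsum.symm with h | h
    · exact hne h
    · exact hx0ne h
  · -- the span equality
    apply le_antisymm
    · rw [Submodule.span_le]
      rintro x ⟨i, hij, u, hu, rfl⟩
      show (monomial u (1 : k) : MvPolynomial (Fin n) k) • m i ∈ partialSpan k n M m j
      exact Submodule.smul_mem _ _ (Submodule.subset_span ⟨i, hij, rfl⟩)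
    · intro x hx
      have hx' : x ∈ Submodule.span (MvPolynomial (Fin n) k)
          (m '' {i : Fin p | (i : ℕ) < j}) := hx
      refine Submodule.span_induction ?_ ?_ ?_ ?_ hx'
      · rintro y ⟨i, hi, rfl⟩
        have h1 := coreA i hi 0
        rwa [monomial_zero', C_1, one_smul] at h1
      · exact Submodule.zero_mem _
      · intro y z _ _ hy hz
        exact Submodule.add_mem _ hy hz
      · intro r y _ hy
        exact hRclosed r y hy
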